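/- Let T be a power partial isometry on a Hilbert space H and p ≥ 2. Then the subspace H_p = ⊕_{n=1}^p (T^{n−1}T*^{n−1} − T^n T*^n)(T*^{p−n}T^{p−n} − T*^{p−n+1}T^{p−n+1})H is reducing for T, and T restricted to H_p is unitarily equivalent to J_p ⊗ 1 on ℂ^p ⊗ M_p, where J_p is the truncated shift on ℂ^p (J_p e_n = e_{n+1} for n < p, J_p e_p = 0) and M_p = (1−TT*)(T*^{p−1}T^{p−1} − T*^p T^p)H. -/

import Mathlib

open ContinuousLinearMap


section Helpers

variable {R : Type*} [Ring R]

private lemma hw_sub_mul_comm {a b c d : R} (h1 : a*c = c*a) (h2 : a*d = d*a)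
    (h3 : b*c = c*b) (h4 : b*d = d*b) : (a-b)*(c-d) = (c-d)*(a-b) := by
  simp only [sub_mul, mul_sub, h1, h2, h3, h4]; abel

private lemma hw_diff_idem {a b : R} (ha : a*a = a) (hb : b*b = b)
    (hab : a*b = b) (hba : b*a = b) : (a-b)*(a-b) = a-b := by
  simp only [sub_mul, mul_sub, ha, hb, hab, hba]; abel

private lemma hw_diff_orth {a b c d : R} (h1 : a*c = c) (h2 : a*d = d)
    (h3 : b*c = c) (h4 : b*d = d) : (a-b)*(c-d) = 0 := by
  simp only [sub_mul, mul_sub, h1, h2, h3, h4]; abel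

private lemma hw_diff_orth' {a b c d : R} (h1 : a*c = a) (h2 : a*d = a)
    (h3 : b*c = b) (h4 : b*d = b) : (a-b)*(c-d) = 0 := by
  simp only [sub_mul, mul_sub, h1, h2, h3, h4]; abel

private lemma hw_diff_absorb {a b c : R} (h1 : c*a = a) (h2 : c*b = b) :
    c*(a-b) = a-b := by simp only [mul_sub, h1, h2]

private lemma hw_diff_absorb' {a b c : R} (h1 : a*c = a) (h2 : b*c = b) :
    (a-b)*c = a-b := by simp only [sub_mul, h1, h2]

end Helpers

section CommIdem

variable {H : Type*} [NormedAddCommGroup H] [InnerProductSpace ℂ H] [CompleteSpace H]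

private lemma hw_comm_of_idem (P Q : H →L[ℂ] H) (hPs : star P = P) (hQs : star Q = Q)
    (hPP : P*P = P) (hQQ : Q*Q = Q) (h : P*Q*(P*Q) = P*Q) : P*Q = Q*P := by
  set A := P*Q with hA
  set R := P*Q*P with hR
  have hRs : star R = R := by rw [hR, star_mul, star_mul, hPs, hQs, mul_assoc]
  have hAs : star A = Q*P := by rw [hA, star_mul, hPs, hQs]
  have e1 : A * star A = R := by
    rw [hAs, hA, hR]
    calc P*Q*(Q*P) = P*(Q*Q)*P := by noncomm_ring
    _ = P*Q*P := by rw [hQQ]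
  have e2 : A * R = R := by
    rw [hA, hR, ← mul_assoc, h]
  have e3 : R * star A = R := by
    rw [hAs, hR]
    calc P*Q*P*(Q*P) = P*Q*(P*Q)*P := by noncomm_ring
    _ = P*Q*P := by rw [h]
  have e4 : R * R = R := by
    rw [hR]
    calc P*Q*P*(P*Q*P) = P*Q*(P*P)*Q*P := by noncomm_ring
    _ = P*Q*(P*Q)*P := by rw [hPP]; noncomm_ring
    _ = P*Q*P := by rw [h]
  have key : (A - R) * star (A - R) = 0 := by
    rw [star_sub, hRs, mul_sub, sub_mul, sub_mul, e1, e2, e3, e4]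
    abel
  have hAR : A = R := by
    have h0 := (CStarRing.mul_star_self_eq_zero_iff (A - R)).mp key
    exact sub_eq_zero.mp h0
  calc P*Q = A := hA.symm
  _ = star A := by rw [hAR, hRs]
  _ = Q*P := hAs

end CommIdem



private lemma pmerge {M : Type*} [Monoid M] (a : M) (m k : ℕ) (x : M) :
    a^m * (a^k * x) = a^(m+k) * x := by rw [← mul_assoc, ← pow_add]

private lemma pmerge' {M : Type*} [Monoid M] (a : M) (m k : ℕ) :
    a^m * a^k = a^(m+k) := (pow_add a m k).symm

section PPI
variable {H : Type*} [NormedAddCommGroup H] [InnerProductSpace ℂ H] [CompleteSpace H]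
variable {T : H →L[ℂ] H}

private noncomputable def Eop (T : H →L[ℂ] H) (n : ℕ) : H →L[ℂ] H := T ^ n * (adjoint T) ^ n
private noncomputable def Fop (T : H →L[ℂ] H) (n : ℕ) : H →L[ℂ] H := (adjoint T) ^ n * T ^ n


private lemma star_adj : star (adjoint T) = T := by
  rw [← star_eq_adjoint, star_star]

private lemma hT_star (hT : ∀ n : ℕ, T ^ n * (adjoint T) ^ n * T ^ n = T ^ n) : ∀ n : ℕ, (adjoint T)^n * T^n * (adjoint T)^n = (adjoint T)^n := by
  intro n
  have := congrArg star (hT n)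
  simpa only [star_mul, star_pow, star_eq_adjoint, adjoint_adjoint, mul_assoc] using this

-- nested forms
private lemma hTn (hT : ∀ n : ℕ, T ^ n * (adjoint T) ^ n * T ^ n = T ^ n) : ∀ (n : ℕ) (x : H →L[ℂ] H),
    T^n * ((adjoint T)^n * (T^n * x)) = T^n * x := by
  intro n x; rw [← mul_assoc, ← mul_assoc, hT n]

private lemma hTn' (hT : ∀ n : ℕ, T ^ n * (adjoint T) ^ n * T ^ n = T ^ n) : ∀ n : ℕ, T^n * ((adjoint T)^n * T^n) = T^n := by
  intro n; rw [← mul_assoc, hT n]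

private lemma hSn (hT : ∀ n : ℕ, T ^ n * (adjoint T) ^ n * T ^ n = T ^ n) : ∀ (n : ℕ) (x : H →L[ℂ] H),
    (adjoint T)^n * (T^n * ((adjoint T)^n * x)) = (adjoint T)^n * x := by
  intro n x; rw [← mul_assoc, ← mul_assoc, hT_star hT n]

private lemma hSn' (hT : ∀ n : ℕ, T ^ n * (adjoint T) ^ n * T ^ n = T ^ n) : ∀ n : ℕ, (adjoint T)^n * (T^n * (adjoint T)^n) = (adjoint T)^n := by
  intro n; rw [← mul_assoc, hT_star hT n]

private lemma star_Eop (n : ℕ) : star (Eop T n) = Eop T n := by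
  simp only [Eop, star_mul, star_pow, star_eq_adjoint, adjoint_adjoint]

private lemma star_Fop (n : ℕ) : star (Fop T n) = Fop T n := by
  simp only [Fop, star_mul, star_pow, star_eq_adjoint, adjoint_adjoint]

private lemma Eop_zero : Eop T 0 = 1 := by simp [Eop]

private lemma Fop_zero : Fop T 0 = 1 := by simp [Fop]

private lemma E_absorb (hT : ∀ n : ℕ, T ^ n * (adjoint T) ^ n * T ^ n = T ^ n) {m n : ℕ} (h : m ≤ n) : Eop T m * Eop T n = Eop T n := by
  obtain ⟨k, rfl⟩ := Nat.exists_eq_add_of_le h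
  simp only [Eop, pow_add, mul_assoc]
  exact hTn hT m _

private lemma E_absorb' (hT : ∀ n : ℕ, T ^ n * (adjoint T) ^ n * T ^ n = T ^ n) {m n : ℕ} (h : m ≤ n) : Eop T n * Eop T m = Eop T n := by
  have := congrArg star (E_absorb hT h)
  simpa only [star_mul, star_Eop] using this

private lemma F_absorb (hT : ∀ n : ℕ, T ^ n * (adjoint T) ^ n * T ^ n = T ^ n) {m n : ℕ} (h : m ≤ n) : Fop T m * Fop T n = Fop T n := by
  obtain ⟨k, rfl⟩ := Nat.exists_eq_add_of_le h
  simp only [Fop, pow_add, mul_assoc]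
  exact hSn hT m _

private lemma F_absorb' (hT : ∀ n : ℕ, T ^ n * (adjoint T) ^ n * T ^ n = T ^ n) {m n : ℕ} (h : m ≤ n) : Fop T n * Fop T m = Fop T n := by
  have := congrArg star (F_absorb hT h)
  simpa only [star_mul, star_Fop] using this

private lemma E_idem (hT : ∀ n : ℕ, T ^ n * (adjoint T) ^ n * T ^ n = T ^ n) (n : ℕ) : Eop T n * Eop T n = Eop T n := E_absorb hT le_rfl

private lemma F_idem (hT : ∀ n : ℕ, T ^ n * (adjoint T) ^ n * T ^ n = T ^ n) (n : ℕ) : Fop T n * Fop T n = Fop T n := F_absorb hT le_rfl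

private lemma FE_idem (hT : ∀ n : ℕ, T ^ n * (adjoint T) ^ n * T ^ n = T ^ n) (m n : ℕ) : Fop T m * Eop T n * (Fop T m * Eop T n)
    = Fop T m * Eop T n := by
  simp only [Fop, Eop, mul_assoc, pmerge, pmerge']
  rw [add_comm n m]
  simp only [hTn hT, hTn' hT, hSn hT, hSn' hT]

private lemma EF_comm (hT : ∀ n : ℕ, T ^ n * (adjoint T) ^ n * T ^ n = T ^ n) (m n : ℕ) :
    Eop T n * Fop T m = Fop T m * Eop T n :=
  (hw_comm_of_idem (Fop T m) (Eop T n) (star_Fop m) (star_Eop n) (F_idem hT m)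
    (E_idem hT n) (FE_idem hT m n)).symm

private noncomputable def Qop (T : H →L[ℂ] H) (p n : ℕ) : H →L[ℂ] H :=
  (Eop T (n-1) - Eop T n) * (Fop T (p-n) - Fop T (p-n+1))

private lemma GD_comm (hT : ∀ n : ℕ, T ^ n * (adjoint T) ^ n * T ^ n = T ^ n) (a b c d : ℕ) :
    (Eop T a - Eop T b) * (Fop T c - Fop T d) = (Fop T c - Fop T d) * (Eop T a - Eop T b) :=
  hw_sub_mul_comm (EF_comm hT c a) (EF_comm hT d a) (EF_comm hT c b) (EF_comm hT d b)

private lemma star_Qop (hT : ∀ n : ℕ, T ^ n * (adjoint T) ^ n * T ^ n = T ^ n) (p n : ℕ) :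
    star (Qop T p n) = Qop T p n := by
  rw [Qop, star_mul, star_sub, star_sub, star_Eop, star_Eop, star_Fop, star_Fop]
  exact (GD_comm hT _ _ _ _).symm

private lemma Q_idem (hT : ∀ n : ℕ, T ^ n * (adjoint T) ^ n * T ^ n = T ^ n) {p n : ℕ}
    (h1 : 1 ≤ n) : Qop T p n * Qop T p n = Qop T p n := by
  have hGG : (Eop T (n-1) - Eop T n) * (Eop T (n-1) - Eop T n) = Eop T (n-1) - Eop T n :=
    hw_diff_idem (E_idem hT _) (E_idem hT _) (E_absorb hT (by omega)) (E_absorb' hT (by omega))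
  have hDD : (Fop T (p-n) - Fop T (p-n+1)) * (Fop T (p-n) - Fop T (p-n+1))
      = Fop T (p-n) - Fop T (p-n+1) :=
    hw_diff_idem (F_idem hT _) (F_idem hT _) (F_absorb hT (by omega)) (F_absorb' hT (by omega))
  rw [Qop, mul_assoc, ← mul_assoc (Fop T (p-n) - Fop T (p-n+1)), ← GD_comm hT,
    mul_assoc, hDD, ← mul_assoc, hGG]

private lemma Q_orth (hT : ∀ n : ℕ, T ^ n * (adjoint T) ^ n * T ^ n = T ^ n) {p m n : ℕ}
    (hm : 1 ≤ m) (hn : 1 ≤ n) (hmn : m ≠ n) : Qop T p m * Qop T p n = 0 := by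
  have hGG : (Eop T (m-1) - Eop T m) * (Eop T (n-1) - Eop T n) = 0 := by
    rcases lt_or_gt_of_ne hmn with h | h
    · exact hw_diff_orth (E_absorb hT (by omega)) (E_absorb hT (by omega))
        (E_absorb hT (by omega)) (E_absorb hT (by omega))
    · exact hw_diff_orth' (E_absorb' hT (by omega)) (E_absorb' hT (by omega))
        (E_absorb' hT (by omega)) (E_absorb' hT (by omega))
  rw [Qop, Qop, mul_assoc, ← mul_assoc (Fop T (p-m) - Fop T (p-m+1)), ← GD_comm hT,
    mul_assoc, ← mul_assoc, ← mul_assoc, hGG, zero_mul, zero_mul]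

private lemma I1 (k : ℕ) : Eop T (k+1) * T = T * (Eop T k * Fop T 1) := by
  simp only [Eop, Fop, pow_one]
  rw [pow_succ' T k, pow_succ (adjoint T) k]
  simp only [mul_assoc]

private lemma I2 (k : ℕ) : T * Fop T (k+1) = (Eop T 1 * Fop T k) * T := by
  simp only [Eop, Fop, pow_one]
  rw [pow_succ' (adjoint T) k, pow_succ T k]
  simp only [mul_assoc]

private lemma TQ (hT : ∀ n : ℕ, T ^ n * (adjoint T) ^ n * T ^ n = T ^ n) {p n : ℕ}
    (h1 : 1 ≤ n) (h2 : n + 1 ≤ p) : T * Qop T p n = Qop T p (n+1) * T := by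
  have en : n - 1 + 1 = n := by omega
  have ep1 : p - n - 1 + 1 = p - n := by omega
  have ep2 : p - (n+1) = p - n - 1 := by omega
  have hFD : Fop T 1 * (Fop T (p-n) - Fop T (p-n+1)) = Fop T (p-n) - Fop T (p-n+1) :=
    hw_diff_absorb (F_absorb hT (by omega)) (F_absorb hT (by omega))
  have hGE : (Eop T n - Eop T (n+1)) * Eop T 1 = Eop T n - Eop T (n+1) :=
    hw_diff_absorb' (E_absorb' hT (by omega)) (E_absorb' hT (by omega))
  have hI1a : Eop T n * T = T * (Eop T (n-1) * Fop T 1) := by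
    have := I1 (T := T) (n-1); rwa [en] at this
  have hI1b : Eop T (n+1) * T = T * (Eop T n * Fop T 1) := I1 n
  have hI2a : T * Fop T (p-n) = (Eop T 1 * Fop T (p-n-1)) * T := by
    have := I2 (T := T) (p-n-1); rwa [ep1] at this
  have hI2b : T * Fop T (p-n+1) = (Eop T 1 * Fop T (p-n)) * T := I2 (p-n)
  have step1 : T * ((Eop T (n-1) - Eop T n) * Fop T 1) = (Eop T n - Eop T (n+1)) * T := by
    rw [sub_mul, mul_sub, ← hI1a, ← hI1b, sub_mul]
  have step2 : T * (Fop T (p-n) - Fop T (p-n+1))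
      = (Eop T 1 * (Fop T (p-n-1) - Fop T (p-n))) * T := by
    rw [mul_sub, hI2a, hI2b, mul_sub, sub_mul]
  have hQ' : Qop T p (n+1) = (Eop T n - Eop T (n+1)) * (Fop T (p-n-1) - Fop T (p-n)) := by
    rw [Qop, Nat.add_sub_cancel, ep2, ep1]
  calc T * Qop T p n
      = T * ((Eop T (n-1) - Eop T n) * (Fop T 1 * (Fop T (p-n) - Fop T (p-n+1)))) := by
        rw [Qop, hFD]
    _ = (T * ((Eop T (n-1) - Eop T n) * Fop T 1)) * (Fop T (p-n) - Fop T (p-n+1)) := by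
        simp only [mul_assoc]
    _ = ((Eop T n - Eop T (n+1)) * T) * (Fop T (p-n) - Fop T (p-n+1)) := by rw [step1]
    _ = (Eop T n - Eop T (n+1)) * (T * (Fop T (p-n) - Fop T (p-n+1))) := by
        rw [mul_assoc]
    _ = (Eop T n - Eop T (n+1)) * ((Eop T 1 * (Fop T (p-n-1) - Fop T (p-n))) * T) := by
        rw [step2]
    _ = (((Eop T n - Eop T (n+1)) * Eop T 1) * (Fop T (p-n-1) - Fop T (p-n))) * T := by
        simp only [mul_assoc]
    _ = Qop T p (n+1) * T := by rw [hGE, hQ']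

private lemma SQ (hT : ∀ n : ℕ, T ^ n * (adjoint T) ^ n * T ^ n = T ^ n) {p n : ℕ}
    (h1 : 1 ≤ n) (h2 : n + 1 ≤ p) :
    adjoint T * Qop T p (n+1) = Qop T p n * adjoint T := by
  have := congrArg star (TQ hT h1 h2)
  simp only [star_mul, star_Qop hT, star_eq_adjoint] at this
  exact this.symm

private lemma SQ1 (hT : ∀ n : ℕ, T ^ n * (adjoint T) ^ n * T ^ n = T ^ n) (p : ℕ) :
    adjoint T * Qop T p 1 = 0 := by
  have hts : adjoint T * T * adjoint T = adjoint T := by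
    have := hT_star hT 1; simpa only [pow_one] using this
  have h0 : adjoint T * (Eop T 0 - Eop T 1) = 0 := by
    simp only [Eop, pow_zero, pow_one, one_mul, mul_one, mul_sub, ← mul_assoc, hts, sub_self]
  rw [Qop, ← mul_assoc, h0, zero_mul]

private lemma Q1T (hT : ∀ n : ℕ, T ^ n * (adjoint T) ^ n * T ^ n = T ^ n) (p : ℕ) :
    Qop T p 1 * T = 0 := by
  have := congrArg star (SQ1 hT p)
  simp only [star_mul, star_Qop hT, star_eq_adjoint, adjoint_adjoint, star_zero] at this
  exact this

private lemma TQp (hT : ∀ n : ℕ, T ^ n * (adjoint T) ^ n * T ^ n = T ^ n) (p : ℕ) :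
    T * Qop T p p = 0 := by
  have hts : T * adjoint T * T = T := by
    have := hT 1; simpa only [pow_one] using this
  have h0 : T * (Fop T (p-p) - Fop T (p-p+1)) = 0 := by
    simp only [Nat.sub_self, zero_add, Fop, pow_zero, pow_one, one_mul, mul_one, mul_sub,
      ← mul_assoc, hts, sub_self]
  rw [Qop, GD_comm hT, ← mul_assoc, h0, zero_mul]

private lemma QpS (hT : ∀ n : ℕ, T ^ n * (adjoint T) ^ n * T ^ n = T ^ n) (p : ℕ) :
    Qop T p p * adjoint T = 0 := by
  have := congrArg star (TQp hT p)
  simpa only [star_mul, star_Qop hT, star_eq_adjoint, star_zero] using this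

private lemma F1Q (hT : ∀ n : ℕ, T ^ n * (adjoint T) ^ n * T ^ n = T ^ n) {p n : ℕ}
    (h2 : n + 1 ≤ p) : Fop T 1 * Qop T p n = Qop T p n := by
  have hFD : Fop T 1 * (Fop T (p-n) - Fop T (p-n+1)) = Fop T (p-n) - Fop T (p-n+1) :=
    hw_diff_absorb (F_absorb hT (by omega)) (F_absorb hT (by omega))
  have hcomm : Fop T 1 * (Eop T (n-1) - Eop T n) = (Eop T (n-1) - Eop T n) * Fop T 1 := by
    rw [mul_sub, sub_mul, EF_comm hT, EF_comm hT]
  rw [Qop, ← mul_assoc, hcomm, mul_assoc, hFD]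

private lemma E1Q (hT : ∀ n : ℕ, T ^ n * (adjoint T) ^ n * T ^ n = T ^ n) {p n : ℕ}
    (h1 : 2 ≤ n) : Eop T 1 * Qop T p n = Qop T p n := by
  have hGE : Eop T 1 * (Eop T (n-1) - Eop T n) = Eop T (n-1) - Eop T n :=
    hw_diff_absorb (E_absorb hT (by omega)) (E_absorb hT (by omega))
  rw [Qop, ← mul_assoc, hGE]

private lemma EQ (hT : ∀ n : ℕ, T ^ n * (adjoint T) ^ n * T ^ n = T ^ n) (p i : ℕ) :
    Eop T i * Qop T p (i+1) = Qop T p (i+1) := by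
  have hGE : Eop T i * (Eop T (i+1-1) - Eop T (i+1)) = Eop T (i+1-1) - Eop T (i+1) := by
    rw [Nat.add_sub_cancel]
    exact hw_diff_absorb (E_absorb hT (by omega)) (E_absorb hT (by omega))
  rw [Qop, ← mul_assoc, hGE]

private lemma FQ1 (hT : ∀ n : ℕ, T ^ n * (adjoint T) ^ n * T ^ n = T ^ n) {p i : ℕ}
    (h : i ≤ p - 1) : Fop T i * Qop T p 1 = Qop T p 1 := by
  have hFD : Fop T i * (Fop T (p-1) - Fop T (p-1+1)) = Fop T (p-1) - Fop T (p-1+1) :=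
    hw_diff_absorb (F_absorb hT (by omega)) (F_absorb hT (by omega))
  have hcomm : Fop T i * (Eop T (1-1) - Eop T 1) = (Eop T (1-1) - Eop T 1) * Fop T i := by
    rw [mul_sub, sub_mul, EF_comm hT, EF_comm hT]
  rw [Qop, ← mul_assoc, hcomm, mul_assoc, hFD]

private lemma SQpow (hT : ∀ n : ℕ, T ^ n * (adjoint T) ^ n * T ^ n = T ^ n) {p : ℕ} :
    ∀ i, i + 1 ≤ p → (adjoint T)^i * Qop T p (i+1) = Qop T p 1 * (adjoint T)^i := by
  intro i
  induction i with
  | zero => intro _; simp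
  | succ i ih =>
    intro h
    rw [pow_succ, mul_assoc, SQ hT (by omega) (by omega), ← mul_assoc, ih (by omega),
      mul_assoc, ← pow_succ]

private lemma TQpow (hT : ∀ n : ℕ, T ^ n * (adjoint T) ^ n * T ^ n = T ^ n) {p : ℕ} :
    ∀ i, i + 1 ≤ p → T^i * Qop T p 1 = Qop T p (i+1) * T^i := by
  intro i
  induction i with
  | zero => intro _; simp
  | succ i ih =>
    intro h
    rw [pow_succ' T i, mul_assoc, ih (by omega), ← mul_assoc, TQ hT (by omega) (by omega),
      mul_assoc, ← pow_succ']

private lemma inner_S (y z : H) (hz : T (adjoint T z) = z) :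
    (inner ℂ (adjoint T y) (adjoint T z) : ℂ) = inner ℂ y z := by
  rw [ContinuousLinearMap.adjoint_inner_left, hz]

private lemma SQpow_inner (hT : ∀ n : ℕ, T ^ n * (adjoint T) ^ n * T ^ n = T ^ n) {p : ℕ} :
    ∀ i, i + 1 ≤ p → ∀ a b : H,
      (inner ℂ (((adjoint T)^i * Qop T p (i+1)) a) (((adjoint T)^i * Qop T p (i+1)) b) : ℂ)
        = inner ℂ ((Qop T p (i+1)) a) ((Qop T p (i+1)) b) := by
  intro i
  induction i with
  | zero => intro _ a b; simp
  | succ i ih =>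
    intro h a b
    have hop : (adjoint T)^(i+1) * Qop T p (i+1+1) = ((adjoint T)^i * Qop T p (i+1)) * adjoint T := by
      rw [pow_succ, mul_assoc, SQ hT (by omega) (by omega), ← mul_assoc]
    have hop2 : Qop T p (i+1) * adjoint T = adjoint T * Qop T p (i+1+1) :=
      (SQ hT (by omega) (by omega)).symm
    have hfix : ∀ c : H, T (adjoint T (Qop T p (i+1+1) c)) = Qop T p (i+1+1) c := by
      intro c
      have h1 : Eop T 1 * Qop T p (i+1+1) = Qop T p (i+1+1) := E1Q hT (by omega)
      have := congrFun (congrArg (fun (A : H →L[ℂ] H) => (A : H → H)) h1) c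
      simpa only [ContinuousLinearMap.mul_apply, Eop, pow_one] using this
    rw [hop]
    simp only [ContinuousLinearMap.mul_apply]
    have ih' := ih (by omega) (adjoint T a) (adjoint T b)
    simp only [ContinuousLinearMap.mul_apply] at ih'
    rw [ih']
    have e1 : ∀ c : H, Qop T p (i+1) (adjoint T c) = adjoint T (Qop T p (i+1+1) c) := by
      intro c
      have := congrFun (congrArg (fun (A : H →L[ℂ] H) => (A : H → H)) hop2) c
      simpa only [ContinuousLinearMap.mul_apply] using this
    rw [e1, e1, inner_S _ _ (hfix b)]

end PPI




set_option maxHeartbeats 1600000 in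
/-- For a power partial isometry `T` and `p ≥ 2`, the subspace
`H_p = ⊕_{n=1}^p (T^{n−1}T*^{n−1} − T^n T*^n)(T*^{p−n}T^{p−n} − T*^{p−n+1}T^{p−n+1})H`
is reducing for `T`, and `T` restricted to `H_p` is unitarily equivalent to
`J_p ⊗ 1` on `ℂ^p ⊗ M_p`, where `J_p` is the truncated shift and
`M_p = (1−TT*)(T*^{p−1}T^{p−1} − T*^p T^p)H`.  Here `ℂ^p ⊗ M_p` is realised as the
`ℓ²`-product `PiLp 2 (fun _ : Fin p => M_p)` and `J_p ⊗ 1` as the truncated shift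
`(J_p ⊗ 1)f(0) = 0`, `(J_p ⊗ 1)f(i+1) = f(i)`. -/
theorem restriction_unitarily_equivalent_truncated_shift
    {H : Type*} [NormedAddCommGroup H] [InnerProductSpace ℂ H] [CompleteSpace H]
    (T : H →L[ℂ] H)
    (hT : ∀ n : ℕ, T ^ n * (adjoint T) ^ n * T ^ n = T ^ n)
    (p : ℕ) (hp : 2 ≤ p)
    (Hp : Submodule ℂ H)
    (hHp : Hp = ⨆ n ∈ Finset.Icc 1 p, LinearMap.range (ContinuousLinearMap.toLinearMap
      ((T ^ (n - 1) * (adjoint T) ^ (n - 1) - T ^ n * (adjoint T) ^ n) *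
        ((adjoint T) ^ (p - n) * T ^ (p - n)
          - (adjoint T) ^ (p - n + 1) * T ^ (p - n + 1)))))
    (Mp : Submodule ℂ H)
    (hMp : Mp = LinearMap.range (ContinuousLinearMap.toLinearMap
      ((1 - T * adjoint T) *
        ((adjoint T) ^ (p - 1) * T ^ (p - 1) - (adjoint T) ^ p * T ^ p)))) :
    (∀ x ∈ Hp, adjoint T x ∈ Hp) ∧
    ∃ hinv : ∀ x ∈ Hp, T x ∈ Hp,
      ∃ U : Hp ≃ₗᵢ[ℂ] PiLp 2 (fun _ : Fin p => Mp),
        ∀ x : Hp,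
          U ⟨T x, hinv x x.2⟩ ⟨0, by omega⟩ = 0 ∧
          ∀ i : Fin p, ∀ h : i.val + 1 < p,
            U ⟨T x, hinv x x.2⟩ ⟨i.val + 1, h⟩ = U x i := by
  -- identify Mp with the range of `Qop T p 1`
  have hop1 : Qop T p 1 = (1 - T * adjoint T) *
      ((adjoint T)^(p-1) * T^(p-1) - (adjoint T)^p * T^p) := by
    have hpp : p - 1 + 1 = p := by omega
    simp only [Qop, Eop, Fop, Nat.sub_self, pow_zero, pow_one, one_mul, hpp]
  have hMp' : Mp = LinearMap.range (ContinuousLinearMap.toLinearMap (Qop T p 1)) := by rw [hMp, hop1]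
  -- membership of ranges of the `Qop` in `Hp`
  have hQHp : ∀ n : ℕ, 1 ≤ n → n ≤ p → ∀ y : H, Qop T p n y ∈ Hp := by
    intro n h1 h2 y
    rw [hHp]
    exact Submodule.mem_iSup_of_mem n
      (Submodule.mem_iSup_of_mem (Finset.mem_Icc.mpr ⟨h1, h2⟩) ⟨y, rfl⟩)
  have hQMp : ∀ y : H, Qop T p 1 y ∈ Mp := by
    intro y; rw [hMp']; exact ⟨y, rfl⟩
  have hMpfix : ∀ y : H, y ∈ Mp → Qop T p 1 y = y := by
    intro y hy
    rw [hMp'] at hy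
    obtain ⟨a, rfl⟩ := hy
    rw [ContinuousLinearMap.coe_coe, ← ContinuousLinearMap.mul_apply, Q_idem hT le_rfl]
  -- the projection onto `Hp`
  have hPQ : ∀ n : ℕ, 1 ≤ n → n ≤ p →
      (∑ i : Fin p, Qop T p ((i:ℕ)+1)) * Qop T p n = Qop T p n := by
    intro n h1 h2
    rw [Finset.sum_mul, Finset.sum_eq_single (⟨n-1, by omega⟩ : Fin p)]
    · have h3 : ((⟨n-1, by omega⟩ : Fin p) : ℕ) + 1 = n := by
        show n - 1 + 1 = n; omega
      rw [h3, Q_idem hT h1]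
    · intro b _ hb
      have hb2 := b.2
      refine Q_orth hT (by omega) h1 ?_
      intro hc
      exact hb (Fin.ext (show (b:ℕ) = n-1 by omega))
    · intro hmem; exact absurd (Finset.mem_univ _) hmem
  have hPfix : ∀ x : H, x ∈ Hp → (∑ i : Fin p, Qop T p ((i:ℕ)+1)) x = x := by
    intro x hx
    have hle : Hp ≤ LinearMap.eqLocus ((∑ i : Fin p, Qop T p ((i:ℕ)+1) : H →L[ℂ] H) : H →ₗ[ℂ] H)
        ((ContinuousLinearMap.id ℂ H : H →L[ℂ] H) : H →ₗ[ℂ] H) := by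
      rw [hHp]
      refine iSup₂_le fun n hn => ?_
      rintro z ⟨y, rfl⟩
      have hn' := Finset.mem_Icc.mp hn
      refine LinearMap.mem_eqLocus.mpr ?_
      show (∑ i : Fin p, Qop T p ((i:ℕ)+1)) (Qop T p n y) = (ContinuousLinearMap.id ℂ H) (Qop T p n y)
      rw [← ContinuousLinearMap.mul_apply, hPQ n hn'.1 hn'.2]
      rfl
    exact LinearMap.mem_eqLocus.mp (hle hx)
  -- invariance under the adjoint
  have hSmem : ∀ x ∈ Hp, adjoint T x ∈ Hp := by
    intro x hx
    rw [← hPfix x hx, ContinuousLinearMap.sum_apply, map_sum]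
    apply Submodule.sum_mem
    intro i _
    have hi := i.2
    rcases Nat.eq_zero_or_pos (i : ℕ) with h0 | hpos
    · have h1 : adjoint T (Qop T p ((i:ℕ)+1) x) = 0 := by
        rw [h0, ← ContinuousLinearMap.mul_apply]
        rw [show (0:ℕ)+1 = 1 from rfl, SQ1 hT p, ContinuousLinearMap.zero_apply]
      rw [h1]; exact Submodule.zero_mem _
    · have h1 : adjoint T (Qop T p ((i:ℕ)+1) x) = Qop T p (i:ℕ) (adjoint T x) := by
        rw [← ContinuousLinearMap.mul_apply, ← ContinuousLinearMap.mul_apply]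
        rw [SQ hT hpos (by omega)]
      rw [h1]; exact hQHp _ hpos (by omega) _
  -- invariance under `T`
  have hTmem : ∀ x ∈ Hp, T x ∈ Hp := by
    intro x hx
    rw [← hPfix x hx, ContinuousLinearMap.sum_apply, map_sum]
    apply Submodule.sum_mem
    intro i _
    have hi := i.2
    rcases Nat.lt_or_ge ((i:ℕ)+1) p with hlt | hge
    · have h1 : T (Qop T p ((i:ℕ)+1) x) = Qop T p ((i:ℕ)+1+1) (T x) := by
        rw [← ContinuousLinearMap.mul_apply, ← ContinuousLinearMap.mul_apply]
        rw [TQ hT (by omega) (by omega)]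
      rw [h1]; exact hQHp _ (by omega) (by omega) _
    · have hip : (i:ℕ)+1 = p := by omega
      have h1 : T (Qop T p ((i:ℕ)+1) x) = 0 := by
        rw [← ContinuousLinearMap.mul_apply, hip, TQp hT p, ContinuousLinearMap.zero_apply]
      rw [h1]; exact Submodule.zero_mem _
  -- the unitary map, componentwise
  have hUmem : ∀ (x : H) (i : Fin p), ((adjoint T)^(i:ℕ)) (Qop T p ((i:ℕ)+1) x) ∈ Mp := by
    intro x i
    have hi := i.2
    have h1 : ((adjoint T)^(i:ℕ)) (Qop T p ((i:ℕ)+1) x) = Qop T p 1 (((adjoint T)^(i:ℕ)) x) := by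
      rw [← ContinuousLinearMap.mul_apply, SQpow hT (p := p) _ (by omega),
        ContinuousLinearMap.mul_apply]
    rw [h1]; exact hQMp _
  have hVmem : ∀ f : PiLp 2 (fun _ : Fin p => Mp),
      (∑ i : Fin p, (T^(i:ℕ)) ((f i : H))) ∈ Hp := by
    intro f
    apply Submodule.sum_mem
    intro i _
    have hi := i.2
    have h1 : (T^(i:ℕ)) ((f i : H)) = Qop T p ((i:ℕ)+1) ((T^(i:ℕ)) ((f i : H))) := by
      conv_lhs => rw [← hMpfix _ (f i).2]
      rw [← ContinuousLinearMap.mul_apply, TQpow hT _ (by omega),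
        ContinuousLinearMap.mul_apply]
    rw [h1]; exact hQHp _ (by omega) (by omega) _
  let Umap : Hp →ₗ[ℂ] PiLp 2 (fun _ : Fin p => Mp) :=
    { toFun := fun x => WithLp.toLp 2 fun i => ⟨((adjoint T)^(i:ℕ)) (Qop T p ((i:ℕ)+1) (x:H)), hUmem _ i⟩
      map_add' := by
        intro x y
        refine PiLp.ext fun i => ?_
        apply Subtype.ext
        simp [map_add]
      map_smul' := by
        intro c x
        refine PiLp.ext fun i => ?_
        apply Subtype.ext
        simp [map_smul] }
  let Vmap : PiLp 2 (fun _ : Fin p => Mp) →ₗ[ℂ] Hp :=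
    { toFun := fun f => ⟨∑ i : Fin p, (T^(i:ℕ)) ((f i : H)), hVmem f⟩
      map_add' := by
        intro f g
        apply Subtype.ext
        simp [map_add, Finset.sum_add_distrib]
      map_smul' := by
        intro c f
        apply Subtype.ext
        simp [map_smul, Finset.smul_sum] }
  have hUapp : ∀ (z : Hp) (i : Fin p),
      ((Umap z i : Mp) : H) = ((adjoint T)^(i:ℕ)) (Qop T p ((i:ℕ)+1) (z:H)) := fun z i => rfl
  -- V ∘ U = id
  have hVU : ∀ x : Hp, Vmap (Umap x) = x := by
    intro x
    apply Subtype.ext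
    show (∑ i : Fin p, (T^(i:ℕ)) (((adjoint T)^(i:ℕ)) (Qop T p ((i:ℕ)+1) (x:H)))) = (x:H)
    have h1 : ∀ i : Fin p,
        (T^(i:ℕ)) (((adjoint T)^(i:ℕ)) (Qop T p ((i:ℕ)+1) (x:H))) = Qop T p ((i:ℕ)+1) (x:H) := by
      intro i
      have hop : T^(i:ℕ) * ((adjoint T)^(i:ℕ) * Qop T p ((i:ℕ)+1)) = Qop T p ((i:ℕ)+1) := by
        rw [← mul_assoc]; exact EQ hT p (i:ℕ)
      calc (T^(i:ℕ)) (((adjoint T)^(i:ℕ)) (Qop T p ((i:ℕ)+1) (x:H)))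
          = (T^(i:ℕ) * ((adjoint T)^(i:ℕ) * Qop T p ((i:ℕ)+1))) (x:H) := rfl
        _ = (Qop T p ((i:ℕ)+1)) (x:H) := by rw [hop]
    rw [Finset.sum_congr rfl (fun i _ => h1 i), ← ContinuousLinearMap.sum_apply]
    exact hPfix _ x.2
  -- U ∘ V = id
  have hUV : ∀ (f : PiLp 2 (fun _ : Fin p => Mp)) (i : Fin p),
      ((adjoint T)^(i:ℕ)) (Qop T p ((i:ℕ)+1) (∑ j : Fin p, (T^(j:ℕ)) ((f j : H)))) = (f i : H) := by
    intro f i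
    have hi := i.2
    rw [map_sum, map_sum, Finset.sum_eq_single i]
    · have hfi : Qop T p 1 ((f i : H)) = ((f i : H)) := hMpfix _ (f i).2
      have hop : (adjoint T)^(i:ℕ) * (Qop T p ((i:ℕ)+1) * (T^(i:ℕ) * Qop T p 1))
          = Qop T p 1 := by
        rw [TQpow hT (p := p) _ (by omega), ← mul_assoc (Qop T p ((i:ℕ)+1)),
          Q_idem hT (by omega), ← TQpow hT (p := p) _ (by omega), ← mul_assoc]
        exact FQ1 hT (by omega)
      conv_lhs => rw [← hfi]
      calc ((adjoint T)^(i:ℕ)) ((Qop T p ((i:ℕ)+1)) ((T^(i:ℕ)) ((Qop T p 1) ((f i : H)))))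
          = ((adjoint T)^(i:ℕ) * (Qop T p ((i:ℕ)+1) * (T^(i:ℕ) * Qop T p 1))) ((f i : H)) := rfl
        _ = (Qop T p 1) ((f i : H)) := by rw [hop]
        _ = ((f i : H)) := hfi
    · intro j _ hj
      have hj2 := j.2
      have hfj : Qop T p 1 ((f j : H)) = ((f j : H)) := hMpfix _ (f j).2
      have hop : (adjoint T)^(i:ℕ) * (Qop T p ((i:ℕ)+1) * (T^(j:ℕ) * Qop T p 1))
          = 0 := by
        rw [TQpow hT (p := p) _ (by omega), ← mul_assoc (Qop T p ((i:ℕ)+1)),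
          Q_orth hT (by omega) (by omega) (by intro hc; exact hj (Fin.ext (by omega))),
          zero_mul, mul_zero]
      conv_lhs => rw [← hfj]
      calc ((adjoint T)^(i:ℕ)) ((Qop T p ((i:ℕ)+1)) ((T^(j:ℕ)) ((Qop T p 1) ((f j : H)))))
          = ((adjoint T)^(i:ℕ) * (Qop T p ((i:ℕ)+1) * (T^(j:ℕ) * Qop T p 1))) ((f j : H)) := rfl
        _ = (0 : H →L[ℂ] H) ((f j : H)) := by rw [hop]
        _ = 0 := rfl
    · intro h; exact absurd (Finset.mem_univ i) h
  -- inner product preservation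
  have hinner : ∀ x y : Hp, (inner ℂ (Umap x) (Umap y) : ℂ) = inner ℂ x y := by
    intro x y
    rw [PiLp.inner_apply, Submodule.coe_inner]
    have hcomp : ∀ i : Fin p, (inner ℂ (Umap x i) (Umap y i) : ℂ)
        = inner ℂ (Qop T p ((i:ℕ)+1) (x:H)) (Qop T p ((i:ℕ)+1) (y:H)) := by
      intro i
      have hi := i.2
      rw [Submodule.coe_inner]
      have h2 := SQpow_inner hT (p := p) (i:ℕ) (by omega) (x:H) (y:H)
      simp only [ContinuousLinearMap.mul_apply] at h2
      exact h2
    rw [Finset.sum_congr rfl (fun i _ => hcomp i)]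
    conv_rhs => rw [← hPfix _ x.2, ← hPfix _ y.2]
    rw [ContinuousLinearMap.sum_apply, ContinuousLinearMap.sum_apply, sum_inner]
    refine Finset.sum_congr rfl fun i _ => ?_
    rw [inner_sum, Finset.sum_eq_single i]
    · intro j _ hj
      have hadj : ContinuousLinearMap.adjoint (Qop T p ((i:ℕ)+1)) = Qop T p ((i:ℕ)+1) := by
        rw [← ContinuousLinearMap.star_eq_adjoint, star_Qop hT]
      rw [← hadj, ContinuousLinearMap.adjoint_inner_left, ← ContinuousLinearMap.mul_apply,
        Q_orth hT (by omega) (by omega) (fun hc => hj (Fin.ext (by omega))),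
        ContinuousLinearMap.zero_apply, inner_zero_right]
    · intro h; exact absurd (Finset.mem_univ i) h
  let e : Hp ≃ₗ[ℂ] PiLp 2 (fun _ : Fin p => Mp) :=
    LinearEquiv.ofLinear Umap Vmap
      (by
        refine LinearMap.ext fun f => ?_
        refine PiLp.ext fun i => ?_
        exact Subtype.ext (hUV f i))
      (by
        refine LinearMap.ext fun x => ?_
        exact hVU x)
  refine ⟨hSmem, hTmem, e.isometryOfInner (fun x y => hinner x y), ?_⟩
  intro x
  constructor
  · apply Subtype.ext
    show ((adjoint T)^(0:ℕ)) (Qop T p ((0:ℕ)+1) (T (x:H))) = (0 : H)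
    rw [pow_zero, ContinuousLinearMap.one_apply, ← ContinuousLinearMap.mul_apply,
      Q1T hT p, ContinuousLinearMap.zero_apply]
  · intro i h
    apply Subtype.ext
    show ((adjoint T)^((i:ℕ)+1)) (Qop T p ((i:ℕ)+1+1) (T (x:H)))
      = ((adjoint T)^(i:ℕ)) (Qop T p ((i:ℕ)+1) (x:H))
    have h1 : adjoint T * T = Fop T 1 := by rw [Fop, pow_one, pow_one]
    have hop : (adjoint T)^((i:ℕ)+1) * (Qop T p ((i:ℕ)+1+1) * T)
        = (adjoint T)^(i:ℕ) * Qop T p ((i:ℕ)+1) := by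
      calc (adjoint T)^((i:ℕ)+1) * (Qop T p ((i:ℕ)+1+1) * T)
          = (adjoint T)^((i:ℕ)+1) * (T * Qop T p ((i:ℕ)+1)) := by
            rw [← TQ hT (by omega) (by omega)]
        _ = (adjoint T)^(i:ℕ) * ((adjoint T * T) * Qop T p ((i:ℕ)+1)) := by
            rw [pow_succ]; simp only [mul_assoc]
        _ = (adjoint T)^(i:ℕ) * Qop T p ((i:ℕ)+1) := by rw [h1, F1Q hT (by omega)]
    rw [← ContinuousLinearMap.mul_apply, ← ContinuousLinearMap.mul_apply, mul_assoc, hop,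
      ContinuousLinearMap.mul_apply]
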